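/- arXiv:1609.04201 — 2 statements merged into one kernel-verified Lean document; each statement's English description precedes it below -/
import Mathlib

section
/- Let S be a unital ring, σ an injective endomorphism, δ a left σ-derivation, and f ∈ R = S[t;σ,δ] monic of degree m ≥ 2. The set R_m = {g ∈ R : deg(g) < m} together with termwise addition and the multiplication g ∘ h = (gh) mod_r f (remainder of right division by f) is a unital nonassociative ring S_f with multiplicative identity 1. -/
/-- An abstract presentation of the skew polynomial ring `S[t;σ,δ]`:
a ring `R` together with an embedding of `S`, a variable `t` satisfying the
commutation rule `t·a = σ(a)·t + δ(a)`, such that the `t^i` form a basis of `R`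
as a left `S`-module (encoded by the coefficient equivalence). -/
structure SkewPolyRing (S : Type*) (R : Type*) [Ring S] [Ring R]
    (σ : S →+* S) (δ : S →+ S) : Type _ where
  ι : S →+* R
  t : R
  t_comm : ∀ a : S, t * ι a = ι (σ a) * t + ι (δ a)
  coeff : R ≃+ (ℕ →₀ S)
  coeff_symm : ∀ p : ℕ →₀ S, coeff.symm p = p.sum fun i a => ι a * t ^ i

namespace SkewPolyRing

variable {S R : Type*} [Ring S] [Ring R] {σ : S →+* S} {δ : S →+ S}

/-- `g` has degree `< m`. -/
def degLT (P : SkewPolyRing S R σ δ) (g : R) (m : ℕ) : Prop :=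
  ∀ i, m ≤ i → P.coeff g i = 0

/-- The degree of a skew polynomial (with `deg 0 = 0` by convention). -/
noncomputable def deg (P : SkewPolyRing S R σ δ) (g : R) : ℕ :=
  (P.coeff g).support.sup id

/-- `f` is monic of degree `m`. -/
def MonicDeg (P : SkewPolyRing S R σ δ) (f : R) (m : ℕ) : Prop :=
  P.coeff f m = 1 ∧ ∀ i, m < i → P.coeff f i = 0

/-- `modr` computes a remainder of right division by `f`. -/
def IsModr (P : SkewPolyRing S R σ δ) (f : R) (m : ℕ) (modr : R → R) : Prop :=
  ∀ g : R, P.degLT (modr g) m ∧ ∃ q : R, g = q * f + modr g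

end SkewPolyRing

namespace SkewPolyRing

variable {S R : Type*} [Ring S] [Ring R] {σ : S →+* S} {δ : S →+ S}

lemma repr' (P : SkewPolyRing S R σ δ) (x : R) :
    x = (P.coeff x).sum fun i a => P.ι a * P.t ^ i := by
  conv_lhs => rw [← P.coeff.symm_apply_apply x]
  rw [P.coeff_symm]

lemma coeff_gen (P : SkewPolyRing S R σ δ) (i : ℕ) (b : S) :
    P.coeff (P.ι b * P.t ^ i) = Finsupp.single i b := by
  have : P.coeff.symm (Finsupp.single i b) = P.ι b * P.t ^ i := by
    rw [P.coeff_symm, Finsupp.sum_single_index]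
    simp
  rw [← this, P.coeff.apply_symm_apply]

lemma hom_ext' (P : SkewPolyRing S R σ δ) {M : Type*} [AddCommMonoid M]
    (F G : R →+ M) (h : ∀ i b, F (P.ι b * P.t ^ i) = G (P.ι b * P.t ^ i)) (x : R) :
    F x = G x := by
  conv_lhs => rw [repr' P x]
  conv_rhs => rw [repr' P x]
  rw [map_finsuppSum, map_finsuppSum]
  exact Finsupp.sum_congr fun i _ => h i _

lemma coeff_iota_mul (P : SkewPolyRing S R σ δ) (a : S) (x : R) (j : ℕ) :
    P.coeff (P.ι a * x) j = a * P.coeff x j := by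
  have := hom_ext' P
    ((Finsupp.applyAddHom j).comp (P.coeff.toAddMonoidHom.comp (AddMonoidHom.mulLeft (P.ι a))))
    ((AddMonoidHom.mulLeft a).comp ((Finsupp.applyAddHom j).comp P.coeff.toAddMonoidHom))
    (fun i b => by
      simp only [AddMonoidHom.coe_comp, Function.comp_apply, AddMonoidHom.coe_mulLeft,
        AddEquiv.coe_toAddMonoidHom, Finsupp.applyAddHom_apply]
      rw [← mul_assoc, ← map_mul, coeff_gen, coeff_gen]
      by_cases h : i = j <;> simp [Finsupp.single_apply, h]) x
  simpa using this

lemma coeff_mul_t_succ (P : SkewPolyRing S R σ δ) (x : R) (j : ℕ) :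
    P.coeff (x * P.t) (j + 1) = P.coeff x j := by
  have := hom_ext' P
    ((Finsupp.applyAddHom (j + 1)).comp (P.coeff.toAddMonoidHom.comp (AddMonoidHom.mulRight P.t)))
    ((Finsupp.applyAddHom j).comp P.coeff.toAddMonoidHom)
    (fun i b => by
      simp only [AddMonoidHom.coe_comp, Function.comp_apply, AddMonoidHom.coe_mulRight,
        AddEquiv.coe_toAddMonoidHom, Finsupp.applyAddHom_apply]
      rw [mul_assoc, ← pow_succ, coeff_gen, coeff_gen]
      simp [Finsupp.single_apply]) x
  simpa using this

lemma coeff_mul_t_zero (P : SkewPolyRing S R σ δ) (x : R) :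
    P.coeff (x * P.t) 0 = 0 := by
  have := hom_ext' P
    ((Finsupp.applyAddHom 0).comp (P.coeff.toAddMonoidHom.comp (AddMonoidHom.mulRight P.t)))
    0
    (fun i b => by
      simp only [AddMonoidHom.coe_comp, Function.comp_apply, AddMonoidHom.coe_mulRight,
        AddEquiv.coe_toAddMonoidHom, Finsupp.applyAddHom_apply, AddMonoidHom.zero_apply]
      rw [mul_assoc, ← pow_succ, coeff_gen]
      simp [Finsupp.single_apply]) x
  simpa using this

lemma coeff_mul_tpow_add (P : SkewPolyRing S R σ δ) (x : R) (j l : ℕ) :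
    P.coeff (x * P.t ^ j) (l + j) = P.coeff x l := by
  induction j with
  | zero => simp
  | succ j ih =>
      rw [pow_succ, ← mul_assoc, ← add_assoc, coeff_mul_t_succ, ih]

lemma coeff_mul_tpow_lt (P : SkewPolyRing S R σ δ) (x : R) {j k : ℕ} (h : k < j) :
    P.coeff (x * P.t ^ j) k = 0 := by
  induction j generalizing k with
  | zero => omega
  | succ j ih =>
      rw [pow_succ, ← mul_assoc]
      cases k with
      | zero => exact coeff_mul_t_zero P _
      | succ k => rw [coeff_mul_t_succ]; exact ih (by omega)

lemma tpow_mul_iota (P : SkewPolyRing S R σ δ) (i : ℕ) (a : S) :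
    (∀ k, i < k → P.coeff (P.t ^ i * P.ι a) k = 0) ∧
      P.coeff (P.t ^ i * P.ι a) i = (σ ^ i) a := by
  induction i generalizing a with
  | zero =>
      constructor
      · intro k hk
        have : P.t ^ 0 * P.ι a = P.ι a * P.t ^ 0 := by simp
        rw [this, coeff_gen, Finsupp.single_apply, if_neg (by omega)]
      · have : P.t ^ 0 * P.ι a = P.ι a * P.t ^ 0 := by simp
        rw [this, coeff_gen]
        simp
  | succ i ih =>
      have hsplit : P.t ^ (i + 1) * P.ι a
          = (P.t ^ i * P.ι (σ a)) * P.t + P.t ^ i * P.ι (δ a) := by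
        rw [pow_succ, mul_assoc, P.t_comm, mul_add, ← mul_assoc]
      constructor
      · intro k hk
        rw [hsplit]
        simp only [map_add, Finsupp.add_apply]
        cases k with
        | zero => omega
        | succ k =>
            rw [coeff_mul_t_succ, (ih (σ a)).1 k (by omega),
              (ih (δ a)).1 (k + 1) (by omega), add_zero]
      · rw [hsplit]
        simp only [map_add, Finsupp.add_apply]
        rw [coeff_mul_t_succ, (ih (σ a)).2, (ih (δ a)).1 (i + 1) (by omega), add_zero,
          pow_succ]
        rfl

lemma coeff_tpow_mul_f (P : SkewPolyRing S R σ δ) {f : R} {m : ℕ}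
    (hf : P.MonicDeg f m) (i : ℕ) :
    (∀ k, i + m < k → P.coeff (P.t ^ i * f) k = 0) ∧
      P.coeff (P.t ^ i * f) (i + m) = 1 := by
  have hexp : P.t ^ i * f
      = (P.coeff f).sum fun j b => (P.t ^ i * P.ι b) * P.t ^ j := by
    conv_lhs => rw [repr' P f]
    rw [Finsupp.mul_sum]
    exact Finsupp.sum_congr fun j _ => by rw [mul_assoc]
  have key : ∀ k, P.coeff (P.t ^ i * f) k
      = ∑ j ∈ (P.coeff f).support,
          P.coeff ((P.t ^ i * P.ι (P.coeff f j)) * P.t ^ j) k := by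
    intro k
    rw [hexp, map_finsuppSum, Finsupp.sum]
    exact Finset.sum_apply' k
  have hsupp : ∀ j ∈ (P.coeff f).support, j ≤ m := by
    intro j hj
    by_contra h
    exact (Finsupp.mem_support_iff.mp hj) (hf.2 j (by omega))
  constructor
  · intro k hk
    rw [key]
    apply Finset.sum_eq_zero
    intro j hj
    have hjm := hsupp j hj
    have : k = (k - j) + j := by omega
    rw [this, coeff_mul_tpow_add]
    exact (tpow_mul_iota P i _).1 _ (by omega)
  · rw [key]
    rw [Finset.sum_eq_single m]
    · rw [coeff_mul_tpow_add, hf.1, (tpow_mul_iota P i 1).2, map_one]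
    · intro j hj hjm
      have hjle := hsupp j hj
      have : i + m = (i + (m - j)) + j := by omega
      rw [this, coeff_mul_tpow_add]
      exact (tpow_mul_iota P i _).1 _ (by omega)
    · intro hm
      rw [Finsupp.notMem_support_iff.mp hm]
      simp

lemma mul_f_eq_zero (P : SkewPolyRing S R σ δ) {f : R} {m : ℕ}
    (hf : P.MonicDeg f m) (q : R) (h : P.degLT (q * f) m) : q * f = 0 := by
  by_cases hq : q = 0
  · rw [hq, zero_mul]
  exfalso
  have hc : P.coeff q ≠ 0 := fun hc => hq (by
    have := congrArg P.coeff.symm hc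
    rwa [P.coeff.symm_apply_apply, map_zero] at this)
  have hne : (P.coeff q).support.Nonempty := Finsupp.support_nonempty_iff.mpr hc
  set D := (P.coeff q).support.max' hne with hD
  have hDmem : D ∈ (P.coeff q).support := (P.coeff q).support.max'_mem hne
  have hle : ∀ d ∈ (P.coeff q).support, d ≤ D := fun d hd => Finset.le_max' _ d hd
  have hexp : q * f = (P.coeff q).sum fun d a => P.ι a * (P.t ^ d * f) := by
    conv_lhs => rw [repr' P q]
    rw [Finsupp.sum_mul]
    exact Finsupp.sum_congr fun d _ => by rw [mul_assoc]
  have key : P.coeff (q * f) (D + m)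
      = ∑ d ∈ (P.coeff q).support,
          P.coeff q d * P.coeff (P.t ^ d * f) (D + m) := by
    rw [hexp, map_finsuppSum, Finsupp.sum]
    rw [Finset.sum_apply' (D + m)]
    exact Finset.sum_congr rfl fun d _ => coeff_iota_mul P _ _ _
  have hzero : P.coeff (q * f) (D + m) = 0 := h _ (by omega)
  rw [key, Finset.sum_eq_single D] at hzero
  · rw [(coeff_tpow_mul_f P hf D).2, mul_one] at hzero
    exact Finsupp.mem_support_iff.mp hDmem hzero
  · intro d hd hdD
    have : d < D := lt_of_le_of_ne (hle d hd) hdD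
    rw [(coeff_tpow_mul_f P hf d).1 (D + m) (by omega), mul_zero]
  · intro hD'
    rw [Finsupp.notMem_support_iff.mp hD', zero_mul]

lemma unique_rem (P : SkewPolyRing S R σ δ) {f : R} {m : ℕ}
    (hf : P.MonicDeg f m) {q₁ q₂ r₁ r₂ : R}
    (h₁ : P.degLT r₁ m) (h₂ : P.degLT r₂ m)
    (h : q₁ * f + r₁ = q₂ * f + r₂) : r₁ = r₂ := by
  have hq : q₁ * f = q₂ * f + r₂ - r₁ := by rw [← h]; abel
  have hsub : (q₁ - q₂) * f = r₂ - r₁ := by rw [sub_mul, hq]; abel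
  have hdeg : P.degLT (r₂ - r₁) m := by
    intro i hi
    rw [map_sub, Finsupp.sub_apply, h₁ i hi, h₂ i hi, sub_zero]
  have := mul_f_eq_zero P hf (q₁ - q₂) (by rw [hsub]; exact hdeg)
  rw [hsub] at this
  exact (sub_eq_zero.mp this).symm


lemma degLT_add (P : SkewPolyRing S R σ δ) {g h : R} {m : ℕ}
    (hg : P.degLT g m) (hh : P.degLT h m) : P.degLT (g + h) m := by
  intro i hi
  rw [map_add, Finsupp.add_apply, hg i hi, hh i hi, add_zero]

lemma modr_of_degLT (P : SkewPolyRing S R σ δ) {f : R} {m : ℕ}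
    (hf : P.MonicDeg f m) {modr : R → R} (hmodr : P.IsModr f m modr)
    {g : R} (hg : P.degLT g m) : modr g = g := by
  obtain ⟨hd, q, hq⟩ := hmodr g
  refine unique_rem P hf (q₁ := q) (q₂ := 0) hd hg ?_
  rw [zero_mul, zero_add, ← hq]

lemma modr_add (P : SkewPolyRing S R σ δ) {f : R} {m : ℕ}
    (hf : P.MonicDeg f m) {modr : R → R} (hmodr : P.IsModr f m modr)
    (a b : R) : modr (a + b) = modr a + modr b := by
  obtain ⟨hda, qa, hqa⟩ := hmodr a
  obtain ⟨hdb, qb, hqb⟩ := hmodr b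
  obtain ⟨hd, q, hq⟩ := hmodr (a + b)
  refine unique_rem P hf (q₁ := q) (q₂ := qa + qb) hd (degLT_add P hda hdb) ?_
  rw [← hq, add_mul]
  conv_lhs => rw [hqa, hqb]
  abel

end SkewPolyRing

/-- Let `f ∈ R = S[t;σ,δ]` be monic of degree `m ≥ 2`. The set
`R_m = {g ∈ R : deg g < m}` together with termwise addition and the multiplication
`g ∘ h = (g·h) mod_r f` is a unital nonassociative ring `S_f` with identity `1`:
the multiplication is left and right distributive over addition on `R_m`,
`R_m` is closed under it, and `1` is a two-sided multiplicative identity. -/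
theorem petit_is_unital_nonassociative_ring {S R : Type*} [Ring S] [Ring R]
    (σ : S →+* S) (δ : S →+ S) (hσ : Function.Injective σ)
    (hδ : ∀ a b : S, δ (a * b) = σ a * δ b + δ a * b)
    (P : SkewPolyRing S R σ δ) (f : R) (m : ℕ) (hm : 2 ≤ m)
    (hf : P.MonicDeg f m) (modr : R → R) (hmodr : P.IsModr f m modr) :
    (∀ g h k : R, P.degLT g m → P.degLT h m → P.degLT k m →
        modr ((g + h) * k) = modr (g * k) + modr (h * k)) ∧
    (∀ g h k : R, P.degLT g m → P.degLT h m → P.degLT k m →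
        modr (k * (g + h)) = modr (k * g) + modr (k * h)) ∧
    (∀ g h : R, P.degLT g m → P.degLT h m → P.degLT (modr (g * h)) m) ∧
    P.degLT 1 m ∧
    (∀ g : R, P.degLT g m → modr (1 * g) = g ∧ modr (g * 1) = g) := by
  obtain ⟨hf1, hf2⟩ := hf
  have hf' : P.MonicDeg f m := ⟨hf1, hf2⟩
  refine ⟨?_, ?_, ?_, ?_, ?_⟩
  · intro g h k _ _ _
    rw [add_mul, SkewPolyRing.modr_add P hf' hmodr]
  · intro g h k _ _ _
    rw [mul_add, SkewPolyRing.modr_add P hf' hmodr]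
  · intro g h _ _
    exact (hmodr (g * h)).1
  · intro i hi
    have h1 : (1 : R) = P.ι 1 * P.t ^ 0 := by simp
    rw [h1, SkewPolyRing.coeff_gen, Finsupp.single_apply, if_neg (by omega)]
  · intro g hg
    exact ⟨by rw [one_mul]; exact SkewPolyRing.modr_of_degLT P hf' hmodr hg,
      by rw [mul_one]; exact SkewPolyRing.modr_of_degLT P hf' hmodr hg⟩
end

section
/- Let S be a division ring, σ an injective endomorphism of S, and f = Σ_{i=0}^{m} dᵢtⁱ ∈ S[t;σ] monic of degree m ≥ 2. Then t is left-invertible in the Petit algebra S_f (i.e., there exists g ∈ S_f with g ∘ t = 1) if and only if d₀ is invertible in S, equivalently d₀ ≠ 0. -/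
set_option linter.unusedSectionVars false


namespace SkewPolyRing

variable {S R : Type*} [Ring S] [Ring R] {σ : S →+* S} {δ : S →+ S}

lemma eq_sum (P : SkewPolyRing S R σ 0) (g : R) :
    g = (P.coeff g).sum fun i a => P.ι a * P.t ^ i := by
  conv_lhs => rw [← P.coeff.symm_apply_apply g, P.coeff_symm]

lemma coeff_ι_mul_t_pow (P : SkewPolyRing S R σ 0) (a : S) (k : ℕ) :
    P.coeff (P.ι a * P.t ^ k) = Finsupp.single k a := by
  have h := P.coeff_symm (Finsupp.single k a)
  rw [Finsupp.sum_single_index (by simp)] at h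
  rw [← h, AddEquiv.apply_symm_apply]

lemma t_pow_mul_ι (P : SkewPolyRing S R σ 0) (b : S) (k : ℕ) :
    P.t ^ k * P.ι b = P.ι ((⇑σ)^[k] b) * P.t ^ k := by
  induction k with
  | zero => simp
  | succ n ih =>
    have hc : P.t * P.ι ((⇑σ)^[n] b) = P.ι (σ ((⇑σ)^[n] b)) * P.t := by
      have := P.t_comm ((⇑σ)^[n] b)
      simpa using this
    calc P.t ^ (n + 1) * P.ι b = P.t * (P.t ^ n * P.ι b) := by
          rw [pow_succ', mul_assoc]
      _ = P.t * P.ι ((⇑σ)^[n] b) * P.t ^ n := by rw [ih, ← mul_assoc]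
      _ = P.ι (σ ((⇑σ)^[n] b)) * (P.t * P.t ^ n) := by rw [hc, mul_assoc]
      _ = P.ι ((⇑σ)^[n + 1] b) * P.t ^ (n + 1) := by
          rw [← pow_succ', Function.iterate_succ_apply']

lemma sum_single_eval {s : Finset ℕ} {F : ℕ → S} (k : ℕ) :
    (∑ j ∈ s, Finsupp.single j (F j)) k = if k ∈ s then F k else 0 := by
  rw [Finsupp.finset_sum_apply]
  simp only [Finsupp.single_apply]
  exact Finset.sum_ite_eq' s k F

lemma coeff_sum (P : SkewPolyRing S R σ 0) (p : ℕ →₀ S) (F : ℕ → S → S) :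
    P.coeff (p.sum fun j c => P.ι (F j c) * P.t ^ j) =
      ∑ j ∈ p.support, Finsupp.single j (F j (p j)) := by
  rw [Finsupp.sum, map_sum]
  exact Finset.sum_congr rfl fun j _ => P.coeff_ι_mul_t_pow _ _

lemma coeff_ι_mul (P : SkewPolyRing S R σ 0) (a : S) (v : R) (k : ℕ) :
    P.coeff (P.ι a * v) k = a * P.coeff v k := by
  have hv : P.ι a * v = (P.coeff v).sum fun j c => P.ι (a * c) * P.t ^ j := by
    conv_lhs => rw [P.eq_sum v]
    rw [Finsupp.mul_sum]
    exact Finsupp.sum_congr fun j _ => by rw [← mul_assoc, ← map_mul]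
  rw [hv, coeff_sum, sum_single_eval]
  by_cases h : k ∈ (P.coeff v).support
  · simp [h]
  · simp only [Finsupp.notMem_support_iff] at h
    simp [h]

lemma coeff_mul (P : SkewPolyRing S R σ 0) (u v : R) (k : ℕ) :
    P.coeff (u * v) k = ∑ i ∈ (P.coeff u).support, ∑ j ∈ (P.coeff v).support,
      if i + j = k then P.coeff u i * (⇑σ)^[i] (P.coeff v j) else 0 := by
  have huv : u * v = ∑ i ∈ (P.coeff u).support, ∑ j ∈ (P.coeff v).support,
      P.ι (P.coeff u i * (⇑σ)^[i] (P.coeff v j)) * P.t ^ (i + j) := by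
    conv_lhs => rw [P.eq_sum u, P.eq_sum v]
    rw [Finsupp.sum, Finsupp.sum, Finset.sum_mul]
    refine Finset.sum_congr rfl fun i _ => ?_
    rw [Finset.mul_sum]
    refine Finset.sum_congr rfl fun j _ => ?_
    rw [mul_assoc, ← mul_assoc (P.t ^ i), P.t_pow_mul_ι, mul_assoc, ← pow_add,
      ← mul_assoc, ← map_mul]
  rw [huv, map_sum, Finsupp.finset_sum_apply]
  refine Finset.sum_congr rfl fun i _ => ?_
  rw [map_sum, Finsupp.finset_sum_apply]
  refine Finset.sum_congr rfl fun j _ => ?_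
  rw [P.coeff_ι_mul_t_pow, Finsupp.single_apply]

lemma coeff_mul_zero (P : SkewPolyRing S R σ 0) (u v : R) :
    P.coeff (u * v) 0 = P.coeff u 0 * P.coeff v 0 := by
  rw [coeff_mul]
  by_cases hu : (0 : ℕ) ∈ (P.coeff u).support
  · rw [Finset.sum_eq_single_of_mem 0 hu]
    · by_cases hv : (0 : ℕ) ∈ (P.coeff v).support
      · rw [Finset.sum_eq_single_of_mem 0 hv] <;> simp
        intro j _ hj
        simp [Nat.add_eq_zero, hj]
      · simp only [Finsupp.notMem_support_iff] at hv
        rw [Finset.sum_eq_zero, hv, mul_zero]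
        intro j hj
        have : j ≠ 0 := fun h => by simp [h, Finsupp.notMem_support_iff.2 hv] at hj
        simp [Nat.add_eq_zero, this]
    · intro i _ hi
      rw [Finset.sum_eq_zero]
      intro j _
      simp [Nat.add_eq_zero, hi]
  · simp only [Finsupp.notMem_support_iff] at hu
    rw [Finset.sum_eq_zero, hu, zero_mul]
    intro i hi
    have hi0 : i ≠ 0 := fun h => by simp [h, Finsupp.notMem_support_iff.2 hu] at hi
    rw [Finset.sum_eq_zero]
    intro j _
    simp [Nat.add_eq_zero, hi0]

section
variable [Nontrivial S]

lemma coeff_mul_monic_top (P : SkewPolyRing S R σ 0) (u g : R) (m : ℕ)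
    (hg1 : P.coeff g m = 1) (hg2 : ∀ i, m < i → P.coeff g i = 0) (hu : u ≠ 0) :
    P.coeff (u * g) ((P.coeff u).support.sup id + m)
      = P.coeff u ((P.coeff u).support.sup id) := by
  set n := (P.coeff u).support.sup id with hn
  have hne : (P.coeff u).support.Nonempty := by
    rw [Finsupp.support_nonempty_iff]
    intro h
    exact hu (by simpa using congrArg P.coeff.symm h)
  have hnmem : n ∈ (P.coeff u).support := by
    obtain ⟨b, hb, hb2⟩ := Finset.exists_mem_eq_sup _ hne id
    rw [hn, hb2]; exact hb
  have hmmem : m ∈ (P.coeff g).support := by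
    rw [Finsupp.mem_support_iff, hg1]; exact one_ne_zero
  rw [coeff_mul, Finset.sum_eq_single_of_mem n hnmem]
  · rw [Finset.sum_eq_single_of_mem m hmmem]
    · rw [if_pos rfl, hg1, Function.iterate_fixed (map_one σ) n, mul_one]
    · intro j _ hj
      exact if_neg fun h => hj (Nat.add_left_cancel h)
  · intro i hi hine
    refine Finset.sum_eq_zero fun j hj => if_neg fun h => ?_
    have hile : i ≤ n := Finset.le_sup (f := id) hi
    have hjle : j ≤ m := by
      by_contra hc
      exact (Finsupp.mem_support_iff.1 hj) (hg2 j (lt_of_not_ge hc))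
    have : i = n ∧ j = m := by omega
    exact hine this.1

lemma modr_unique (P : SkewPolyRing S R σ 0) (f : R) (m : ℕ)
    (hf1 : P.coeff f m = 1) (hf2 : ∀ i, m < i → P.coeff f i = 0)
    (modr : R → R)
    (hmodr : ∀ g : R, (∀ i, m ≤ i → P.coeff (modr g) i = 0) ∧ ∃ q : R, g = q * f + modr g)
    (g q r : R) (hr : ∀ i, m ≤ i → P.coeff r i = 0) (hg : g = q * f + r) :
    modr g = r := by
  obtain ⟨hd, q', hq'⟩ := hmodr g
  have key : (q - q') * f = modr g - r := by
    have h3 : q' * f + modr g = q * f + r := hq'.symm.trans hg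
    rw [sub_mul, sub_eq_sub_iff_add_eq_add]
    exact h3.symm.trans (add_comm _ _)
  by_cases h : q - q' = 0
  · have : modr g - r = 0 := by rw [← key, h, zero_mul]
    exact sub_eq_zero.1 this
  · exfalso
    set n := (P.coeff (q - q')).support.sup id with hn
    have hne : (P.coeff (q - q')).support.Nonempty := by
      rw [Finsupp.support_nonempty_iff]
      intro hz
      exact h (by simpa using congrArg P.coeff.symm hz)
    have hnmem : n ∈ (P.coeff (q - q')).support := by
      obtain ⟨b, hb, hb2⟩ := Finset.exists_mem_eq_sup _ hne id
      rw [hn, hb2]; exact hb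
    have h1 := P.coeff_mul_monic_top (q - q') f m hf1 hf2 h
    rw [key] at h1
    have h2 : P.coeff (modr g - r) (n + m) = 0 := by
      rw [map_sub, Finsupp.sub_apply, hd _ (Nat.le_add_left m n),
        hr _ (Nat.le_add_left m n), sub_zero]
    rw [h2] at h1
    exact Finsupp.mem_support_iff.1 hnmem h1.symm

lemma coeff_one (P : SkewPolyRing S R σ 0) : P.coeff 1 = Finsupp.single 0 1 := by
  have := P.coeff_ι_mul_t_pow 1 0
  simpa using this

lemma coeff_t (P : SkewPolyRing S R σ 0) : P.coeff P.t = Finsupp.single 1 1 := by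
  have := P.coeff_ι_mul_t_pow 1 1
  simpa using this

end

end SkewPolyRing

/-- Let `S` be a division ring, `σ` an injective endomorphism of `S`, and
`f = Σ dᵢ tⁱ ∈ S[t;σ]` monic of degree `m ≥ 2`.  Then `t` is left-invertible in the Petit
algebra `S_f` (there is `g ∈ S_f` with `g ∘ t = 1`) if and only if `d₀` is invertible in
`S`, equivalently `d₀ ≠ 0`. -/
theorem petit_t_left_invertible_iff {S R : Type*} [DivisionRing S] [Ring R]
    (σ : S →+* S) (hσ : Function.Injective σ)
    (P : SkewPolyRing S R σ 0) (f : R) (m : ℕ) (hm : 2 ≤ m)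
    (hf : P.MonicDeg f m) (modr : R → R) (hmodr : P.IsModr f m modr) :
    ((∃ g : R, P.degLT g m ∧ modr (g * P.t) = 1) ↔ IsUnit (P.coeff f 0)) ∧
    (IsUnit (P.coeff f 0) ↔ P.coeff f 0 ≠ 0) := by
  obtain ⟨hf1, hf2⟩ := hf
  refine ⟨⟨?_, ?_⟩, isUnit_iff_ne_zero⟩
  · -- left invertible → d₀ unit
    rintro ⟨g, hg, hginv⟩
    rw [isUnit_iff_ne_zero]
    intro hd0
    obtain ⟨_, q, hq⟩ := hmodr (g * P.t)
    rw [hginv] at hq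
    have h0 := congrArg (fun x => P.coeff x 0) hq
    simp only [map_add, Finsupp.add_apply, P.coeff_mul_zero, P.coeff_t,
      P.coeff_one, Finsupp.single_apply, hd0] at h0
    simp at h0
  · -- d₀ unit → left invertible
    intro hd
    rw [isUnit_iff_ne_zero] at hd
    set d0 := P.coeff f 0 with hd0
    set p := Finsupp.erase 0 (P.coeff f) with hp
    set h : R := p.sum fun j c => P.ι c * P.t ^ (j - 1) with hh
    have jne : ∀ j ∈ p.support, j ≠ 0 := by
      intro j hj
      rw [hp, Finsupp.support_erase] at hj
      exact (Finset.mem_erase.1 hj).1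
    have jle : ∀ j ∈ p.support, j ≤ m := by
      intro j hj
      by_contra hc
      have : p j ≠ 0 := Finsupp.mem_support_iff.1 hj
      rw [hp, Finsupp.erase_apply, if_neg (jne j hj)] at this
      exact this (hf2 j (lt_of_not_ge hc))
    have hht : h * P.t = f - P.ι d0 := by
      have h1 : h * P.t = p.sum fun j c => P.ι c * P.t ^ j := by
        rw [hh, Finsupp.sum_mul]
        refine Finsupp.sum_congr fun j hj => ?_
        have hjj : j - 1 + 1 = j := Nat.succ_pred_eq_of_ne_zero (jne j hj)
        rw [mul_assoc, ← pow_succ, hjj]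
      have h2 : f = (p.sum fun j c => P.ι c * P.t ^ j) + P.ι d0 := by
        conv_lhs => rw [P.eq_sum f, ← Finsupp.erase_add_single 0 (P.coeff f)]
        rw [Finsupp.sum_add_index' (by simp) (by intros; rw [map_add, add_mul]),
          Finsupp.sum_single_index (by simp), pow_zero, mul_one, ← hp, ← hd0]
      rw [h1, h2, add_sub_cancel_right]
    have hdegh : ∀ i, m ≤ i → P.coeff h i = 0 := by
      intro i hi
      rw [hh, Finsupp.sum, map_sum, Finsupp.finset_sum_apply]
      refine Finset.sum_eq_zero fun j hj => ?_
      rw [P.coeff_ι_mul_t_pow, Finsupp.single_apply, if_neg]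
      have := jle j hj
      have := jne j hj
      omega
    refine ⟨-(P.ι d0⁻¹ * h), ?_, ?_⟩
    · intro i hi
      rw [map_neg, Finsupp.neg_apply, P.coeff_ι_mul, hdegh i hi, mul_zero, neg_zero]
    · have hgt : -(P.ι d0⁻¹ * h) * P.t = -(P.ι d0⁻¹) * f + 1 := by
        rw [neg_mul, mul_assoc, hht, mul_sub, ← map_mul, inv_mul_cancel₀ hd,
          map_one, neg_sub, neg_mul, sub_eq_add_neg, add_comm]
      refine P.modr_unique f m hf1 hf2 modr hmodr _ (-(P.ι d0⁻¹)) 1 ?_ hgt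
      intro i hi
      rw [P.coeff_one, Finsupp.single_apply, if_neg (by omega)]
end
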